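/- If X ⊆ 2^ω has strong measure zero, then for every closed set F ⊆ 2^ω of measure zero, the algebraic sum X + F = {x + f : x ∈ X, f ∈ F} has outer measure zero. (Forward direction of Pawlikowski's characterization, Theorem 1.) -/

import Mathlib

open MeasureTheory Set Pointwise
open scoped Classical ENNReal
open Filter Topology

/-- The Cantor group `2^ω = ℕ → ZMod 2` with coordinatewise addition mod 2,
carrying the product topology. -/
abbrev Cantor : Type := ℕ → ZMod 2

/-- The Haar probability measure `μ` on `2^ω` (the normalized Haar measure on the compact
group `ℕ → ZMod 2`; by uniqueness of Haar probability measures it coincides with the infinite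
product of the uniform probability measure on `ZMod 2`). Since a `Measure` in Mathlib is
defined on all sets via the induced outer measure, `cantorMeasure A = 0` says exactly that
`A` has outer measure zero, i.e. that `A` is null. -/
noncomputable def cantorMeasure : Measure Cantor :=
  Measure.addHaarMeasure (⊤ : TopologicalSpace.PositiveCompacts Cantor)

/-- The standard distance on `2^ω`: `d(x,y) = 2^{-n}` where `n` is the least index at which
`x` and `y` differ (and `d(x,y) = 0` if `x = y`). It induces the product topology. -/
noncomputable def cantorDist (x y : Cantor) : ℝ :=
  if x = y then 0 else (1 / 2 : ℝ) ^ sInf {n : ℕ | x n ≠ y n}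

/-- The open ball around `x` of radius `ε` with respect to `cantorDist`. -/
def cantorBall (x : Cantor) (ε : ℝ) : Set Cantor :=
  {y | cantorDist x y < ε}

/-- `X ⊆ 2^ω` has strong measure zero (smz): for every sequence `(ε n)` of positive reals
there is a sequence `(c n)` of points of `2^ω` with `X ⊆ ⋃ n, ball (c n) (ε n)`. -/
def HasStrongMeasureZero (X : Set Cantor) : Prop :=
  ∀ ε : ℕ → ℝ, (∀ n, 0 < ε n) → ∃ c : ℕ → Cantor, X ⊆ ⋃ n, cantorBall (c n) (ε n)

instance : cantorMeasure.IsAddLeftInvariant := by unfold cantorMeasure; infer_instance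
instance : IsFiniteMeasure cantorMeasure := by unfold cantorMeasure; infer_instance

/-- basic clopen subgroup -/
def Vset (k : ℕ) : Set Cantor := {y | ∀ i < k, y i = 0}

lemma zmod2_add_self (a : ZMod 2) : a + a = 0 := by fin_cases a <;> rfl

lemma isClosed_Vset (k : ℕ) : IsClosed (Vset k) := by
  have : Vset k = ⋂ i ∈ Finset.range k, (fun y : Cantor => y i) ⁻¹' {0} := by
    ext y; simp [Vset]
  rw [this]
  exact isClosed_biInter fun i _ => isClosed_singleton.preimage (continuous_apply i)

lemma isCompact_Vset (k : ℕ) : IsCompact (Vset k) := (isClosed_Vset k).isCompact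

lemma antitone_Vset : Antitone Vset := by
  intro a b hab y hy i hi; exact hy i (lt_of_lt_of_le hi hab)

lemma ball_subset (c : Cantor) (k : ℕ) : cantorBall c ((1/2 : ℝ)^k) ⊆ {c} + Vset k := by
  intro y hy
  have hmem : ∀ i < k, c i = y i := by
    intro i hik
    by_cases hcy : c = y
    · rw [hcy]
    · have hd : cantorDist c y = (1/2 : ℝ) ^ sInf {n : ℕ | c n ≠ y n} := by
        simp [cantorDist, hcy]
      have hlt : (1/2 : ℝ) ^ sInf {n : ℕ | c n ≠ y n} < (1/2 : ℝ)^k := by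
        rw [← hd]; exact hy
      have hk : k < sInf {n : ℕ | c n ≠ y n} := by
        by_contra h
        push_neg at h
        exact absurd (pow_le_pow_of_le_one (by norm_num) (by norm_num) h) (not_le.mpr hlt)
      have : i ∉ {n : ℕ | c n ≠ y n} := Nat.notMem_of_lt_sInf (lt_trans hik hk)
      simpa using this
  refine ⟨c, mem_singleton c, fun i => c i + y i, ?_, ?_⟩
  · intro i hi; show c i + y i = 0; rw [← hmem i hi]; exact zmod2_add_self (c i)
  · funext i
    show c i + (c i + y i) = y i
    rw [← add_assoc, zmod2_add_self, zero_add]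

lemma iInter_Vset_add {F : Set Cantor} (hF : IsClosed F) : (⋂ k, Vset k + F) = F := by
  apply Subset.antisymm
  · intro z hz
    by_contra hzF
    obtain ⟨I, u, hu, hsub⟩ := isOpen_pi_iff.mp hF.isOpen_compl z hzF
    set k := (I.sup id) + 1 with hk
    have hzk := mem_iInter.mp hz k
    obtain ⟨v, hv, f, hf, hvf⟩ := hzk
    have : f ∈ (I : Set ℕ).pi u := by
      intro a ha
      have hak : a < k := Nat.lt_succ_of_le (Finset.le_sup (f := id) ha)
      have : z a = f a := by
        rw [← hvf]; show v a + f a = f a; rw [hv a hak, zero_add]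
      rw [← this]; exact (hu a ha).2
    exact hsub this hf
  · intro f hf
    refine mem_iInter.mpr fun k => ⟨0, fun i _ => rfl, f, hf, zero_add f⟩

/-- **Forward direction of Pawlikowski's characterization (Theorem 1).**
If `X ⊆ 2^ω` has strong measure zero, then for every closed null set `F ⊆ 2^ω`, the
algebraic (pointwise) sum `X + F = {x + f : x ∈ X, f ∈ F}` has outer measure zero. -/
theorem smz_imp_add_closed_null_is_null (X : Set Cantor) (hX : HasStrongMeasureZero X) :
    ∀ F : Set Cantor, IsClosed F → cantorMeasure F = 0 → cantorMeasure (X + F) = 0 := by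
  intro F hF hFnull
  refine le_antisymm ?_ zero_le
  refine ENNReal.le_of_forall_pos_le_add fun ε hε _ => ?_
  rw [zero_add]
  -- measure of Vset k + F tends to 0
  have hcomp : ∀ k, IsCompact (Vset k + F) := fun k => (isCompact_Vset k).add hF.isCompact
  have htend : Tendsto (fun k => cantorMeasure (Vset k + F)) atTop (𝓝 0) := by
    have := tendsto_measure_iInter_atTop (μ := cantorMeasure) (s := fun k => Vset k + F)
      (fun k => ((hcomp k).isClosed.measurableSet).nullMeasurableSet)
      (fun a b hab => add_subset_add_right (antitone_Vset hab))
      ⟨0, measure_ne_top _ _⟩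
    rwa [iInter_Vset_add hF, hFnull] at this
  -- choose levels
  have hchoice : ∀ n : ℕ, ∃ k, cantorMeasure (Vset k + F) ≤ (ε : ℝ≥0∞) * 2⁻¹ ^ (n+1) := by
    intro n
    have hpos : (0 : ℝ≥0∞) < (ε : ℝ≥0∞) * 2⁻¹ ^ (n+1) := by
      exact ENNReal.mul_pos (by exact_mod_cast hε.ne') (pow_ne_zero _ (by simp))
    exact ((htend.eventually (gt_mem_nhds hpos)).exists).imp fun k hk => hk.le
  choose k hk using hchoice
  -- apply smz
  obtain ⟨c, hc⟩ := hX (fun n => (1/2 : ℝ)^(k n)) (fun n => by positivity)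
  have hsub : X + F ⊆ ⋃ n, ({c n} + Vset (k n)) + F := by
    calc X + F ⊆ (⋃ n, cantorBall (c n) ((1/2:ℝ)^(k n))) + F := add_subset_add_right hc
    _ ⊆ (⋃ n, {c n} + Vset (k n)) + F :=
        add_subset_add_right (iUnion_mono fun n => ball_subset (c n) (k n))
    _ = ⋃ n, ({c n} + Vset (k n)) + F := by rw [iUnion_add]
  calc cantorMeasure (X + F) ≤ ∑' n, cantorMeasure (({c n} + Vset (k n)) + F) :=
        le_trans (measure_mono hsub) (measure_iUnion_le _)
    _ = ∑' n, cantorMeasure (Vset (k n) + F) := by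
        congr 1; funext n
        rw [add_assoc, singleton_add, image_add_left, measure_preimage_add]
    _ ≤ ∑' n, (ε : ℝ≥0∞) * 2⁻¹ ^ (n+1) := ENNReal.tsum_le_tsum fun n => hk n
    _ = ε := by
        rw [ENNReal.tsum_mul_left]
        have : ∑' n : ℕ, (2⁻¹ : ℝ≥0∞) ^ (n+1) = 1 := by
          simp_rw [pow_succ']
          rw [ENNReal.tsum_mul_left, ENNReal.tsum_geometric, ENNReal.one_sub_inv_two]
          exact ENNReal.mul_inv_cancel (by simp) (by simp)
        rw [this, mul_one]
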